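/- Let q = p^n ≡ 3 (mod 4) be an odd prime power, and let 1 ≤ r ≤ q-2. Define T = [(s_i+s_j)^{q-1-r} + (s_i-s_j)^{q-1-r}]_{1≤i,j≤(q-1)/2} over F_q, where s_1,...,s_{(q-1)/2} are the nonzero squares of F_q. Then T is nonsingular if and only if n = 1 and r ∈ {1, 2}. -/

import Mathlib

open Finset Matrix


lemma aux_sum_double {R : Type*} [AddCommMonoid R] (M : ℕ) (g : ℕ → R)
    (h : ∀ l, g (2 * l + 1) = 0) :
    ∑ k ∈ range (2 * M), g k = ∑ l ∈ range M, g (2 * l) := by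
  induction M with
  | zero => simp
  | succ M ih =>
    rw [Nat.mul_succ, sum_range_succ, sum_range_succ, sum_range_succ, ih]
    simp [h M]

lemma aux_binom {R : Type*} [CommRing R] (x y : R) (d M : ℕ) (hd : d < 2 * M) :
    (x + y) ^ d + (x - y) ^ d
      = ∑ l ∈ range M, 2 * (d.choose (2 * l) : R) * x ^ (d - 2 * l) * y ^ (2 * l) := by
  have h1 : (x + y) ^ d = ∑ k ∈ range (d + 1), y ^ k * x ^ (d - k) * (d.choose k : R) := by
    rw [add_comm x y, add_pow]
  have h2 : (x - y) ^ d = ∑ k ∈ range (d + 1), (-y) ^ k * x ^ (d - k) * (d.choose k : R) := by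
    rw [sub_eq_add_neg, add_comm x (-y), add_pow]
  rw [h1, h2, ← sum_add_distrib]
  have hsub : ∑ k ∈ range (d + 1),
      (y ^ k * x ^ (d - k) * (d.choose k : R) + (-y) ^ k * x ^ (d - k) * (d.choose k : R))
      = ∑ k ∈ range (2 * M),
      (y ^ k * x ^ (d - k) * (d.choose k : R) + (-y) ^ k * x ^ (d - k) * (d.choose k : R)) := by
    apply sum_subset
    · intro k hk
      simp only [mem_range] at *
      omega
    · intro k _ hk
      simp only [mem_range, not_lt] at hk
      rw [Nat.choose_eq_zero_of_lt (by omega)]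
      simp
  rw [hsub, aux_sum_double]
  · apply sum_congr rfl
    intro l _
    have : (-y) ^ (2 * l) = y ^ (2 * l) := by
      rw [Even.neg_pow ⟨l, by ring⟩]
    rw [this]
    ring
  · intro l
    have : (-y) ^ (2 * l + 1) = -(y ^ (2 * l + 1)) := by
      rw [Odd.neg_pow ⟨l, by ring⟩]
    rw [this]
    ring

lemma aux_det {F : Type*} [Field F] (m d : ℕ) (hd : d < 2 * m) (s : Fin m → F)
    (hs0 : ∀ i, s i ≠ 0) (hs2 : Function.Injective fun i => s i ^ 2) :
    (Matrix.of fun i j => (s i + s j) ^ d + (s i - s j) ^ d).det ≠ 0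
      ↔ ∀ l : Fin m, (2 * (d.choose (2 * (l : ℕ)) : F)) ≠ 0 := by
  set c : Fin m → F := fun l => 2 * (d.choose (2 * (l : ℕ)) : F) with hc
  have key : (Matrix.of fun i j => (s i + s j) ^ d + (s i - s j) ^ d)
      = (diagonal (fun i => s i ^ d) * vandermonde (fun i => (s i ^ 2)⁻¹) * diagonal c)
        * (vandermonde (fun j => s j ^ 2))ᵀ := by
    ext i j
    rw [Matrix.mul_apply]
    simp only [Matrix.mul_diagonal, Matrix.diagonal_mul, Matrix.vandermonde_apply,
      Matrix.transpose_apply, Matrix.of_apply, hc]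
    rw [aux_binom (s i) (s j) d m hd, Fin.sum_univ_eq_sum_range
      (fun l => s i ^ d * (s i ^ 2)⁻¹ ^ l * (2 * (d.choose (2 * l) : F)) * (s j ^ 2) ^ l) m]
    apply sum_congr rfl
    intro l hl
    rw [← pow_mul (s j) 2 l]
    by_cases h2l : 2 * l ≤ d
    · have hx : s i ^ (d - 2 * l) = s i ^ d * (s i ^ (2 * l))⁻¹ := pow_sub₀ _ (hs0 i) h2l
      rw [hx, inv_pow, ← pow_mul (s i) 2 l]
      field_simp
    · rw [Nat.choose_eq_zero_of_lt (by omega)]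
      simp
  rw [key]
  simp only [Matrix.det_mul, Matrix.det_transpose, Matrix.det_diagonal]
  have hvw : Matrix.det (vandermonde fun i => (s i ^ 2)⁻¹) ≠ 0 := by
    rw [Matrix.det_vandermonde_ne_zero_iff]
    exact fun i j h => hs2 (inv_injective h)
  have hvv : Matrix.det (vandermonde fun j => s j ^ 2) ≠ 0 := by
    rw [Matrix.det_vandermonde_ne_zero_iff]
    exact hs2
  have hsd : ∏ i, s i ^ d ≠ 0 := prod_ne_zero_iff.mpr fun i _ => pow_ne_zero _ (hs0 i)
  constructor
  · intro h l
    have h2 := (mul_ne_zero_iff.mp (mul_ne_zero_iff.mp h).1).2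
    exact prod_ne_zero_iff.mp h2 l (mem_univ l)
  · intro h
    exact mul_ne_zero (mul_ne_zero (mul_ne_zero hsd hvw)
      (prod_ne_zero_iff.mpr fun l _ => h l)) hvv


lemma aux_arith (p n q r : ℕ) (hp : p.Prime) (hpodd : p ≠ 2) (hn : 0 < n)
    (hq : q = p ^ n) (hq2 : q % 2 = 1) (hq3' : 3 ≤ q) (hr1 : 1 ≤ r) (hr2 : r ≤ q - 2) :
    (∀ l : Fin ((q - 1) / 2), ¬ p ∣ (q - 1 - r).choose (2 * (l : ℕ)))
      ↔ n = 1 ∧ (r = 1 ∨ r = 2) := by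
  have hp2 := hp.two_le
  have hp3 : 3 ≤ p := by omega
  have hpo : p % 2 = 1 := by
    rcases Nat.Prime.eq_two_or_odd hp with h | h
    · exact absurd h hpodd
    · exact h
  constructor
  · intro h
    have hrle : r ≤ 2 := by
      by_contra hgt
      have hl : (q - 1) / 2 - 1 < (q - 1) / 2 := by omega
      refine h ⟨(q - 1) / 2 - 1, hl⟩ ?_
      have : (q - 1 - r) < 2 * ((q - 1) / 2 - 1) := by omega
      rw [Nat.choose_eq_zero_of_lt this]
      exact dvd_zero p
    have hn1 : n = 1 := by
      by_contra hne
      have hn2 : 2 ≤ n := by omega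
      obtain ⟨k, hk⟩ : ∃ k, n = k + 2 := ⟨n - 2, by omega⟩
      have hge1 : 1 ≤ p ^ k := Nat.one_le_pow _ _ (by omega)
      have hpk : q = p * (p * p ^ k) := by rw [hq, hk]; ring
      have ha : p ≤ p * p ^ k := Nat.le_mul_of_pos_right p (by positivity)
      have hb : p * p ≤ p * (p * p ^ k) := Nat.mul_le_mul_left p ha
      have hq_ge : p + 6 ≤ q := by nlinarith
      have hl : (p - 1) / 2 < (q - 1) / 2 := by omega
      have h2l : 2 * ((p - 1) / 2) = p - 1 := by omega
      refine h ⟨(p - 1) / 2, hl⟩ ?_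
      have hcoe : (((⟨(p - 1) / 2, hl⟩ : Fin ((q - 1) / 2)) : ℕ)) = (p - 1) / 2 := rfl
      rw [hcoe, h2l]
      -- Lucas step
      haveI : Fact p.Prime := ⟨hp⟩
      have hmod := Choose.choose_modEq_choose_mod_mul_choose_div_nat
        (n := q - 1 - r) (k := p - 1) (p := p)
      have hdmod : (q - 1 - r) % p = p - 1 - r := by
        have hsplit : q - 1 - r = p * (p * p ^ k - 1) + (p - 1 - r) := by
          have hms : p * (p * p ^ k - 1) + p = p * (p * p ^ k) := by
            rw [← Nat.mul_succ]
            congr 1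
            omega
          omega
        rw [hsplit, Nat.mul_add_mod]
        exact Nat.mod_eq_of_lt (by omega)
      have hkmod : (p - 1) % p = p - 1 := Nat.mod_eq_of_lt (by omega)
      have hzero : ((q - 1 - r) % p).choose ((p - 1) % p) = 0 := by
        rw [hdmod, hkmod]
        exact Nat.choose_eq_zero_of_lt (by omega)
      have : (q - 1 - r).choose (p - 1) ≡ 0 [MOD p] := by
        calc (q - 1 - r).choose (p - 1)
            ≡ ((q - 1 - r) % p).choose ((p - 1) % p)
              * ((q - 1 - r) / p).choose ((p - 1) / p) [MOD p] := hmod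
          _ = 0 := by rw [hzero, zero_mul]
      exact (Nat.modEq_zero_iff_dvd).mp this
    exact ⟨hn1, by omega⟩
  · rintro ⟨rfl, hr⟩ l hdvd
    rw [pow_one] at hq
    have hlq := l.isLt
    have hl2 : 2 * (l : ℕ) ≤ q - 1 - r := by omega
    have hfac : p ∣ (q - 1 - r).factorial := by
      rw [← Nat.choose_mul_factorial_mul_factorial hl2]
      exact (hdvd.mul_right _).mul_right _
    have := (Nat.Prime.dvd_factorial hp).mp hfac
    omega




/-- For `q = p^n ≡ 3 (mod 4)` and `1 ≤ r ≤ q-2`, the matrix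
`T = [(s_i+s_j)^{q-1-r} + (s_i-s_j)^{q-1-r}]` over `F_q` (with `s_i` the nonzero squares)
is nonsingular if and only if `n = 1` and `r ∈ {1, 2}`. -/
theorem T_q_2_nonsingular_iff (p n q : ℕ) [Fact p.Prime] (hn : 0 < n) (hq : q = p ^ n)
    (hq3 : q % 4 = 3)
    (F : Type*) [Field F] [Fintype F] (hcard : Fintype.card F = q)
    (r : ℕ) (hr1 : 1 ≤ r) (hr2 : r ≤ q - 2)
    (s : Fin ((q - 1) / 2) → F) (hs : Function.Injective s)
    (hsimg : ∀ x : F, (∃ i, s i = x) ↔ ∃ y : F, y ≠ 0 ∧ y ^ 2 = x) :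
    (Matrix.of fun i j => (s i + s j) ^ (q - 1 - r) + (s i - s j) ^ (q - 1 - r)).det ≠ 0
      ↔ n = 1 ∧ (r = 1 ∨ r = 2) := by
  have hp : p.Prime := Fact.out
  have hq2 : q % 2 = 1 := by omega
  have hq3' : 3 ≤ q := by omega
  have hd2m : q - 1 - r < 2 * ((q - 1) / 2) := by omega
  -- p is odd
  have hpq : p ∣ q := hq ▸ dvd_pow_self p (by omega)
  have hpodd : p ≠ 2 := by
    rintro rfl
    omega
  -- the characteristic of F is p
  haveI hcharF : CharP F p := by
    haveI := ringChar.charP F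
    obtain ⟨k, hcp, hck⟩ := FiniteField.card F (ringChar F)
    have hdvd : p ∣ ringChar F ^ (k : ℕ) := by
      rw [← hck, hcard, hq]
      exact dvd_pow_self p (by omega)
    have : p = ringChar F :=
      (Nat.prime_dvd_prime_iff_eq hp hcp).mp (hp.dvd_of_dvd_pow hdvd)
    rw [this]
    exact ringChar.charP F
  -- -1 is not a square
  have hneg : ¬ IsSquare (-1 : F) := by
    rw [FiniteField.isSquare_neg_one_iff, hcard, hq3]
    simp
  -- s values are nonzero
  have hs0 : ∀ i, s i ≠ 0 := by
    intro i h0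
    obtain ⟨y, hy, hy2⟩ := (hsimg (s i)).mp ⟨i, rfl⟩
    rw [h0] at hy2
    exact hy (pow_eq_zero_iff two_ne_zero |>.mp hy2)
  -- squares of s values are injective
  have hs2 : Function.Injective fun i => s i ^ 2 := by
    intro i j hij
    simp only at hij
    have hfac : (s i - s j) * (s i + s j) = 0 := by ring_nf; linear_combination hij
    rcases mul_eq_zero.mp hfac with h | h
    · exact hs (sub_eq_zero.mp h)
    · exfalso
      obtain ⟨y, hy, hy2⟩ := (hsimg (s i)).mp ⟨i, rfl⟩
      obtain ⟨z, hz, hz2⟩ := (hsimg (s j)).mp ⟨j, rfl⟩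
      apply hneg
      refine ⟨y / z, ?_⟩
      field_simp
      linear_combination - hy2 - hz2 - h
  rw [aux_det ((q - 1) / 2) (q - 1 - r) hd2m s hs0 hs2]
  have h2F : (2 : F) ≠ 0 := by
    intro h
    have h2 : ((2 : ℕ) : F) = 0 := by exact_mod_cast h
    have hdvd := (CharP.cast_eq_zero_iff F p 2).mp h2
    have := Nat.le_of_dvd (by norm_num) hdvd
    have := hp.two_le
    omega
  rw [← aux_arith p n q r hp hpodd hn hq hq2 hq3' hr1 hr2]
  apply forall_congr'
  intro l
  rw [mul_ne_zero_iff]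
  constructor
  · intro hh hdvd
    exact hh.2 ((CharP.cast_eq_zero_iff F p _).mpr hdvd)
  · intro hh
    exact ⟨h2F, fun hc => hh ((CharP.cast_eq_zero_iff F p _).mp hc)⟩
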